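/- In the hit-and-run BLAF with constraint P(T3) ≥ 0.7, the bound P(T1) ≤ 1/3 is tight: there is a satisfying assignment with P(T1) = 1/3, and the maximum of P(T1) over all satisfying assignments equals 1/3. -/
import Mathlib

theorem stmt_13
    (S : Set (ℝ × ℝ × ℝ × ℝ × ℝ × ℝ × ℝ))  -- (PInn, PEinc, PEex, PT1, PT2, PT3, PE1)
    (hS : S = {p : ℝ × ℝ × ℝ × ℝ × ℝ × ℝ × ℝ |
      (0 ≤ p.1 ∧ p.1 ≤ 1) ∧ (0 ≤ p.2.1 ∧ p.2.1 ≤ 1) ∧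
      (0 ≤ p.2.2.1 ∧ p.2.2.1 ≤ 1) ∧ (0 ≤ p.2.2.2.1 ∧ p.2.2.2.1 ≤ 1) ∧
      (0 ≤ p.2.2.2.2.1 ∧ p.2.2.2.2.1 ≤ 1) ∧ (0 ≤ p.2.2.2.2.2.1 ∧ p.2.2.2.2.2.1 ≤ 1) ∧
      (0 ≤ p.2.2.2.2.2.2 ∧ p.2.2.2.2.2.2 ≤ 1) ∧
      p.1 ≤ 1 - p.2.1 ∧ p.2.2.1 ≤ p.1 ∧
      0.9 * p.2.2.2.1 ≤ p.2.1 ∧ p.2.2.2.2.2.2 ≤ p.2.1 ∧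
      p.2.2.2.2.1 ≤ p.2.2.1 ∧ p.2.2.2.2.2.1 ≤ p.2.2.2.2.1 ∧
      0.7 ≤ p.2.2.2.2.2.1}) :
    (∃ p ∈ S, p.2.2.2.1 = 1 / 3) ∧
    IsGreatest ((fun p : ℝ × ℝ × ℝ × ℝ × ℝ × ℝ × ℝ => p.2.2.2.1) '' S) (1 / 3) := by
  subst hS
  have hmem : ((0.7 : ℝ), 0.3, 0.7, 1/3, 0.7, 0.7, 0.3) ∈
      {p : ℝ × ℝ × ℝ × ℝ × ℝ × ℝ × ℝ |
      (0 ≤ p.1 ∧ p.1 ≤ 1) ∧ (0 ≤ p.2.1 ∧ p.2.1 ≤ 1) ∧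
      (0 ≤ p.2.2.1 ∧ p.2.2.1 ≤ 1) ∧ (0 ≤ p.2.2.2.1 ∧ p.2.2.2.1 ≤ 1) ∧
      (0 ≤ p.2.2.2.2.1 ∧ p.2.2.2.2.1 ≤ 1) ∧ (0 ≤ p.2.2.2.2.2.1 ∧ p.2.2.2.2.2.1 ≤ 1) ∧
      (0 ≤ p.2.2.2.2.2.2 ∧ p.2.2.2.2.2.2 ≤ 1) ∧
      p.1 ≤ 1 - p.2.1 ∧ p.2.2.1 ≤ p.1 ∧
      0.9 * p.2.2.2.1 ≤ p.2.1 ∧ p.2.2.2.2.2.2 ≤ p.2.1 ∧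
      p.2.2.2.2.1 ≤ p.2.2.1 ∧ p.2.2.2.2.2.1 ≤ p.2.2.2.2.1 ∧
      0.7 ≤ p.2.2.2.2.2.1} := by
    simp only [Set.mem_setOf_eq]
    norm_num
  refine ⟨⟨_, hmem, rfl⟩, ⟨_, hmem, rfl⟩, ?_⟩
  rintro x ⟨p, hp, rfl⟩
  simp only [Set.mem_setOf_eq] at hp
  obtain ⟨_, _, _, _, _, _, _, h1, h2, h3, _, h4, h5, h6⟩ := hp
  nlinarith
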